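/- For every integer k ≥ 2, the combinatorial identity 2·k^{k-3}/(k-2)! = Σ_{i=1}^{k-1} (i^{i-2}/(i-1)!)·((k-i)^{k-i-2}/(k-i-1)!) holds. -/

import Mathlib

open Finset

noncomputable def cc (j : ℕ) : ℝ := ((j:ℝ)+1)^j / ((j:ℝ)+1)

lemma alt_sum_zero : ∀ (n : ℕ), ∀ k < n, ∀ a : ℝ,
    ∑ j ∈ range (n+1), (-1:ℝ)^j * (n.choose j : ℝ) * (a + j)^k = 0 := by
  intro n
  induction n with
  | zero => intro k hk; omega
  | succ n ih =>
    intro k hk a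
    set f : ℕ → ℝ := fun j => (-1:ℝ)^j * ((n+1).choose j : ℝ) * (a + j)^k with hf
    set g : ℕ → ℝ := fun j => (-1:ℝ)^j * (n.choose j : ℝ) * (a + j)^k with hg
    have hterm : ∀ j : ℕ, f (j+1) = g (j+1) - (-1:ℝ)^j * (n.choose j : ℝ) * (a + j + 1)^k := by
      intro j
      simp only [hf, hg, Nat.choose_succ_succ]
      push_cast
      ring
    have hpeel : ∑ j ∈ range (n+2), f j
        = ∑ j ∈ range (n+1), (-1:ℝ)^j * (n.choose j : ℝ) * ((a + j)^k - (a + j + 1)^k) := by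
      rw [Finset.sum_range_succ' f (n+1)]
      have e2 : ∑ j ∈ range (n+1), f (j+1)
          = ∑ j ∈ range (n+1), g (j+1)
            - ∑ j ∈ range (n+1), (-1:ℝ)^j * (n.choose j : ℝ) * (a + j + 1)^k := by
        rw [← Finset.sum_sub_distrib]
        exact Finset.sum_congr rfl (fun j _ => hterm j)
      have e3 : ∑ j ∈ range (n+1), g (j+1) = ∑ j ∈ range (n+1), g j - g 0 := by
        have := Finset.sum_range_succ' g (n+1)
        have h4 := Finset.sum_range_succ g (n+1)
        have h5 : g (n+1) = 0 := by simp [hg, Nat.choose_succ_self]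
        rw [h5, add_zero] at h4
        linarith [this, h4]
      have hf0 : f 0 = g 0 := by simp [hf, hg]
      have e4 : ∑ j ∈ range (n+1), (-1:ℝ)^j * (n.choose j : ℝ) * ((a + j)^k - (a + j + 1)^k)
          = ∑ j ∈ range (n+1), g j
            - ∑ j ∈ range (n+1), (-1:ℝ)^j * (n.choose j : ℝ) * (a + j + 1)^k := by
        rw [← Finset.sum_sub_distrib]
        exact Finset.sum_congr rfl (fun j _ => by simp only [hg]; ring)
      rw [e2, e3, hf0, e4]
      ring
    rw [hpeel]
    have hbin : ∀ j : ℕ, ((a:ℝ) + j)^k - (a + j + 1)^k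
        = - ∑ m ∈ range k, (a+j)^m * (k.choose m : ℝ) := by
      intro j
      have h := add_pow ((a:ℝ) + j) 1 k
      rw [Finset.sum_range_succ] at h
      simp only [one_pow, mul_one] at h
      rw [h]
      simp
    calc ∑ j ∈ range (n+1), (-1:ℝ)^j * (n.choose j : ℝ) * ((a + j)^k - (a + j + 1)^k)
        = ∑ j ∈ range (n+1), ∑ m ∈ range k,
            -((k.choose m : ℝ) * ((-1:ℝ)^j * (n.choose j : ℝ) * (a + j)^m)) := by
          refine Finset.sum_congr rfl (fun j _ => ?_)
          rw [hbin j, mul_neg, Finset.mul_sum, ← Finset.sum_neg_distrib]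
          exact Finset.sum_congr rfl (fun m _ => by ring)
      _ = ∑ m ∈ range k, -((k.choose m : ℝ) *
            ∑ j ∈ range (n+1), (-1:ℝ)^j * (n.choose j : ℝ) * (a + j)^m) := by
          rw [Finset.sum_comm]
          refine Finset.sum_congr rfl (fun m _ => ?_)
          rw [Finset.mul_sum, Finset.sum_neg_distrib]
      _ = 0 := by
          refine Finset.sum_eq_zero (fun m hm => ?_)
          rw [ih m (by simp only [Finset.mem_range] at hm; omega) a]
          ring

lemma abel_identity : ∀ (n : ℕ) (y : ℝ),
    ∑ j ∈ range (n+1), (n.choose j : ℝ) * cc j * (y + ((n-j : ℕ):ℝ))^(n-j)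
      = (y + n + 1)^n := by
  intro n
  induction n with
  | zero => intro y; simp [cc]
  | succ n ih =>
    -- the function and its candidate derivative
    set F : ℝ → ℝ := fun y =>
      ∑ j ∈ range (n+2), ((n+1).choose j : ℝ) * cc j * (y + ((n+1-j : ℕ):ℝ))^(n+1-j) with hF
    set G : ℝ → ℝ := fun y => (y + (n:ℝ) + 2)^(n+1) with hG
    have hFd : ∀ y : ℝ, HasDerivAt F
        (∑ j ∈ range (n+2), ((n+1).choose j : ℝ) * cc j *
          (((n+1-j : ℕ):ℝ) * (y + ((n+1-j : ℕ):ℝ))^(n+1-j-1))) y := by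
      intro y
      apply HasDerivAt.fun_sum
      intro j _
      have h1 : HasDerivAt (fun y : ℝ => (y + ((n+1-j : ℕ):ℝ))^(n+1-j))
          (((n+1-j:ℕ):ℝ) * (y + ((n+1-j : ℕ):ℝ))^(n+1-j-1)) y := by
        have := ((hasDerivAt_id y).add_const (((n+1-j : ℕ):ℝ))).fun_pow (n+1-j)
        simpa using this
      simpa [mul_assoc] using h1.const_mul (((n+1).choose j : ℝ) * cc j)
    have hderiv_eq : ∀ y : ℝ,
        (∑ j ∈ range (n+2), ((n+1).choose j : ℝ) * cc j *
          (((n+1-j : ℕ):ℝ) * (y + ((n+1-j : ℕ):ℝ))^(n+1-j-1)))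
        = ((n:ℝ)+1) * (y + (n:ℝ) + 2)^n := by
      intro y
      rw [Finset.sum_range_succ]
      simp only [Nat.sub_self, Nat.cast_zero, zero_mul, mul_zero, add_zero]
      have hcongr : ∀ j ∈ range (n+1),
          ((n+1).choose j : ℝ) * cc j *
            (((n+1-j : ℕ):ℝ) * (y + ((n+1-j : ℕ):ℝ))^(n+1-j-1))
          = ((n:ℝ)+1) * ((n.choose j : ℝ) * cc j * ((y+1) + ((n-j : ℕ):ℝ))^(n-j)) := by
        intro j hj
        have hjn : j ≤ n := by simp only [Finset.mem_range] at hj; omega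
        have h1 : n+1-j = (n-j)+1 := by omega
        have h2 : n+1-j-1 = n-j := by omega
        have h3 : ((n+1).choose j : ℝ) * ((n+1-j : ℕ):ℝ) = ((n:ℝ)+1) * (n.choose j : ℝ) := by
          have := Nat.choose_mul_succ_eq n j
          have hc : (n.choose j * (n+1) : ℕ) = ((n+1).choose j * (n+1-j) : ℕ) := this
          have := congrArg (fun m : ℕ => (m:ℝ)) hc
          push_cast at this
          linarith
        have h4 : (y + ((n+1-j : ℕ):ℝ)) = ((y+1) + ((n-j : ℕ):ℝ)) := by
          rw [h1]; push_cast; ring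
        rw [h2, h4]
        calc ((n+1).choose j : ℝ) * cc j * (((n+1-j : ℕ):ℝ) * ((y+1) + ((n-j : ℕ):ℝ))^(n-j))
            = (((n+1).choose j : ℝ) * ((n+1-j : ℕ):ℝ)) * (cc j * ((y+1) + ((n-j : ℕ):ℝ))^(n-j)) := by ring
          _ = _ := by rw [h3]; ring
      rw [Finset.sum_congr rfl hcongr, ← Finset.mul_sum, ih (y+1)]
      ring_nf
    have hGd : ∀ y : ℝ, HasDerivAt G (((n:ℝ)+1) * (y + (n:ℝ) + 2)^n) y := by
      intro y
      have := (((hasDerivAt_id y).add_const (n:ℝ)).add_const 2).fun_pow (n+1)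
      simpa [mul_assoc] using this
    -- constancy of F - G
    have hH : ∀ y : ℝ, HasDerivAt (fun y => F y - G y) 0 y := by
      intro y
      have := (hFd y).sub (hGd y)
      rwa [hderiv_eq y, sub_self] at this
    have hconst : ∀ y : ℝ, F y - G y = F (-((n:ℝ)+2)) - G (-((n:ℝ)+2)) := by
      intro y
      exact is_const_of_deriv_eq_zero (fun x => (hH x).differentiableAt)
        (fun x => (hH x).deriv) y _
    have hG0 : G (-((n:ℝ)+2)) = 0 := by
      simp only [hG]
      rw [show (-((n:ℝ)+2) + (n:ℝ) + 2) = 0 by ring]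
      simp
    have hF0 : F (-((n:ℝ)+2)) = 0 := by
      simp only [hF]
      have hcongr : ∀ j ∈ range (n+2),
          ((n+1).choose j : ℝ) * cc j * ((-((n:ℝ)+2)) + ((n+1-j : ℕ):ℝ))^(n+1-j)
          = (-1:ℝ)^(n+1) * ((-1:ℝ)^j * ((n+1).choose j : ℝ) * ((1:ℝ) + j)^n) := by
        intro j hj
        have hjn : j ≤ n+1 := by simp only [Finset.mem_range] at hj; omega
        have hcast : ((n+1-j : ℕ):ℝ) = (n:ℝ)+1-(j:ℝ) := by
          push_cast [Nat.cast_sub hjn]; ring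
        have hbase : (-((n:ℝ)+2)) + ((n+1-j : ℕ):ℝ) = -((j:ℝ)+1) := by
          rw [hcast]; ring
        rw [hbase, show (-((j:ℝ)+1)) = (-1) * ((j:ℝ)+1) by ring, mul_pow]
        have hsign : (-1:ℝ)^(n+1-j) = (-1:ℝ)^(n+1) * (-1:ℝ)^j := by
          have h3 : (-1:ℝ)^(n+1+j) = (-1:ℝ)^(n+1-j) := by
            rw [show n+1+j = (n+1-j)+2*j from by omega, pow_add, pow_mul]
            simp
          rw [← h3, pow_add]
        have hcc : cc j * ((j:ℝ)+1)^(n+1-j) = ((j:ℝ)+1)^n := by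
          have hne : ((j:ℝ)+1) ≠ 0 := by positivity
          rw [cc, div_mul_eq_mul_div, ← pow_add,
            show j + (n+1-j) = n+1 from by omega, pow_succ, mul_div_assoc,
            div_self hne, mul_one]
        calc ((n+1).choose j : ℝ) * cc j * ((-1:ℝ)^(n+1-j) * ((j:ℝ)+1)^(n+1-j))
            = (-1:ℝ)^(n+1-j) * (((n+1).choose j : ℝ) * (cc j * ((j:ℝ)+1)^(n+1-j))) := by ring
          _ = (-1:ℝ)^(n+1) * ((-1:ℝ)^j * ((n+1).choose j : ℝ) * ((1:ℝ) + j)^n) := by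
              rw [hsign, hcc, show ((j:ℝ)+1) = (1:ℝ)+j by ring]; ring
      rw [Finset.sum_congr rfl hcongr, ← Finset.mul_sum,
        alt_sum_zero (n+1) n (by omega) 1, mul_zero]
    intro y
    have h0 := hconst y
    rw [hF0, hG0] at h0
    have hFy : F y = G y := by linarith
    calc ∑ j ∈ range (n+1+1), ((n+1).choose j : ℝ) * cc j * (y + ((n+1-j:ℕ):ℝ))^(n+1-j)
        = F y := rfl
      _ = G y := hFy
      _ = (y + ((n+1:ℕ):ℝ) + 1)^(n+1) := by rw [hG]; push_cast; ring

lemma abel_one (n : ℕ) :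
    ∑ j ∈ range (n+1), (n.choose j : ℝ) * cc j * (((n-j : ℕ):ℝ)+1)^(n-j)
      = ((n:ℝ)+2)^n := by
  have h := abel_identity n 1
  rw [show ((1:ℝ) + n + 1) = (n:ℝ)+2 by ring] at h
  rw [← h]
  exact Finset.sum_congr rfl (fun j _ => by rw [show ((1:ℝ) + ((n-j:ℕ):ℝ)) = ((n-j:ℕ):ℝ)+1 by ring])

lemma aux_split (a b t C X Y : ℝ) (ha : a ≠ 0) (hb : b ≠ 0) (ht : t ≠ 0)
    (hab : a + b = t) :
    C * (X/a) * (Y/b) = (1/t) * (C*(X/a)*Y + C*X*(Y/b)) := by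
  field_simp
  subst hab; ring

lemma conv_sum (n : ℕ) :
    ∑ j ∈ range (n+1), (n.choose j : ℝ) * cc j * cc (n-j)
      = 2 * ((n:ℝ)+2)^n / ((n:ℝ)+2) := by
  have hn2 : ((n:ℝ)+2) ≠ 0 := by positivity
  have key : ∀ j ∈ range (n+1), (n.choose j : ℝ) * cc j * cc (n-j)
      = (1/((n:ℝ)+2)) * ((n.choose j : ℝ) * cc j * (((n-j:ℕ):ℝ)+1)^(n-j)
        + (n.choose j : ℝ) * ((j:ℝ)+1)^j * cc (n-j)) := by
    intro j hj
    have hjn : j ≤ n := by simp only [Finset.mem_range] at hj; omega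
    have hab : ((j:ℝ)+1) + (((n-j:ℕ):ℝ)+1) = (n:ℝ)+2 := by
      rw [Nat.cast_sub hjn]; ring
    rw [cc, cc]
    exact aux_split _ _ _ _ _ _ (by positivity) (by positivity) hn2 hab
  rw [Finset.sum_congr rfl key, ← Finset.mul_sum, Finset.sum_add_distrib]
  have hS2 : ∑ j ∈ range (n+1), (n.choose j : ℝ) * ((j:ℝ)+1)^j * cc (n-j)
      = ∑ j ∈ range (n+1), (n.choose j : ℝ) * cc j * (((n-j:ℕ):ℝ)+1)^(n-j) := by
    rw [← Finset.sum_range_reflect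
      (fun j => (n.choose j : ℝ) * ((j:ℝ)+1)^j * cc (n-j)) (n+1)]
    refine Finset.sum_congr rfl (fun j hj => ?_)
    have hjn : j ≤ n := by simp only [Finset.mem_range] at hj; omega
    have h1 : n + 1 - 1 - j = n - j := by omega
    have h2 : n - (n - j) = j := by omega
    rw [h1, h2, Nat.choose_symm hjn, cc]; ring
  rw [hS2, abel_one]
  field_simp
  ring

lemma zpow_nat_sub_one (x : ℝ) (hx : x ≠ 0) (j : ℕ) :
    x ^ ((j:ℤ) - 1) = x ^ j / x := by
  rw [zpow_sub₀ hx, zpow_natCast, zpow_one]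


/-- For every integer `k ≥ 2`,
`2 k^{k-3}/(k-2)! = Σ_{i=1}^{k-1} (i^{i-2}/(i-1)!)((k-i)^{k-i-2}/(k-i-1)!)`
(powers interpreted as rational/real numbers, e.g. `2^{-1} = 1/2`). -/
theorem borel_convolution_identity (k : ℕ) (hk : 2 ≤ k) :
    2 * (k : ℝ) ^ ((k : ℤ) - 3) / (Nat.factorial (k - 2) : ℝ)
      = ∑ i ∈ Finset.Icc 1 (k - 1),
          ((i : ℝ) ^ ((i : ℤ) - 2) / (Nat.factorial (i - 1) : ℝ)) *
            (((k - i : ℕ) : ℝ) ^ ((k : ℤ) - (i : ℤ) - 2) /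
              (Nat.factorial (k - i - 1) : ℝ)) := by
  obtain ⟨n, rfl⟩ : ∃ n, k = n + 2 := ⟨k - 2, by omega⟩
  have hIcc : Finset.Icc 1 (n+2-1) = Finset.Ico 1 (n+2) := by
    rw [← Finset.Ico_add_one_right_eq_Icc, show n+2-1+1 = n+2 from by omega]
  rw [hIcc, Finset.sum_Ico_eq_sum_range]
  have hn1 : n + 2 - 1 = n + 1 := by omega
  rw [hn1]
  have hfact : (n.factorial : ℝ) ≠ 0 := by positivity
  have hterm : ∀ j ∈ range (n+1),
      (((1+j : ℕ) : ℝ) ^ (((1+j : ℕ) : ℤ) - 2) / (Nat.factorial ((1+j) - 1) : ℝ)) *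
        ((((n+2) - (1+j) : ℕ) : ℝ) ^ (((n+2:ℕ) : ℤ) - ((1+j:ℕ) : ℤ) - 2) /
          (Nat.factorial ((n+2) - (1+j) - 1) : ℝ))
      = (1 / (n.factorial : ℝ)) * ((n.choose j : ℝ) * cc j * cc (n-j)) := by
    intro j hj
    have hjn : j ≤ n := by simp only [Finset.mem_range] at hj; omega
    -- first factor
    have e1 : ((1+j : ℕ) : ℤ) - 2 = (j:ℤ) - 1 := by push_cast; ring
    have e2 : (1+j) - 1 = j := by omega
    have e3 : (((1+j : ℕ)) : ℝ) = (j:ℝ) + 1 := by push_cast; ring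
    have hne1 : ((j:ℝ)+1) ≠ 0 := by positivity
    have f1 : (((1+j : ℕ) : ℝ) ^ (((1+j : ℕ) : ℤ) - 2)) = cc j := by
      rw [e1, e3, zpow_nat_sub_one _ hne1, cc]
    -- second factor
    have e4 : (n+2) - (1+j) = (n-j) + 1 := by omega
    have e5 : (((n+2:ℕ)) : ℤ) - ((1+j:ℕ) : ℤ) - 2 = ((n-j : ℕ) : ℤ) - 1 := by
      push_cast [Nat.cast_sub hjn]; ring
    have e6 : (n+2) - (1+j) - 1 = n - j := by omega
    have e7 : ((((n-j)+1 : ℕ)) : ℝ) = ((n-j:ℕ):ℝ) + 1 := by push_cast; ring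
    have hne2 : (((n-j:ℕ):ℝ)+1) ≠ 0 := by positivity
    have f2 : ((((n+2) - (1+j) : ℕ) : ℝ) ^ (((n+2:ℕ) : ℤ) - ((1+j:ℕ) : ℤ) - 2)) = cc (n-j) := by
      rw [e4, e5, e7, zpow_nat_sub_one _ hne2, cc]
    rw [f1, f2, e2, e6]
    -- now combine factorials with choose
    have hchoose : (n.choose j : ℝ) = (n.factorial : ℝ) / ((j.factorial : ℝ) * ((n-j).factorial : ℝ)) := by
      rw [Nat.cast_choose ℝ hjn]
    rw [hchoose]
    have hf1 : (j.factorial : ℝ) ≠ 0 := by positivity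
    have hf2 : ((n-j).factorial : ℝ) ≠ 0 := by positivity
    field_simp
  rw [Finset.sum_congr rfl hterm, ← Finset.mul_sum, conv_sum n]
  -- LHS
  have hk2 : (n+2) - 2 = n := by omega
  have hz : ((n+2:ℕ) : ℤ) - 3 = (n:ℤ) - 1 + n - n := by push_cast; ring
  have hbase : (((n+2:ℕ)) : ℝ) = (n:ℝ) + 2 := by push_cast; ring
  have hne : ((n:ℝ)+2) ≠ 0 := by positivity
  have hzpow : (((n+2:ℕ)) : ℝ) ^ (((n+2:ℕ) : ℤ) - 3) = ((n:ℝ)+2)^n / ((n:ℝ)+2) := by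
    rw [hbase, show ((n+2:ℕ) : ℤ) - 3 = (n:ℤ) - 1 by push_cast; ring,
      zpow_sub₀ hne, zpow_natCast, zpow_one]
  rw [hk2, hzpow]
  field_simp
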